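/- Let κ be regular uncountable, μ < κ regular, S ⊆ E^κ_μ stationary, and C = ⟨C_δ : δ ∈ S⟩ a C-sequence (each C_δ a club in δ of order type μ) with the weak coherence property: for all γ < δ from S and all β ∈ nacc(C_γ) ∩ nacc(C_δ), C_γ ∩ β = C_δ ∩ β. Let h : κ → 2^λ be increasing and cofinal where κ = cf(2^λ), and let T_{<δ} be an increasing filtration of the set T of all functions from sets of the form C_δ ∩ β (β ∈ nacc(C_δ), δ ∈ S) into 2^λ, with |T_{<δ}| < 2^λ. Define P_δ := {f : C_δ → h(δ) : for all β ∈ nacc(C_δ), f↾(C_δ ∩ β) ∈ T_{<δ}}. Then for every f : κ → 2^λ, for club-many δ ∈ S, f↾C_δ ∈ P_δ. -/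

import Mathlib

open Cardinal Set

namespace LadderPaper

/-- `C` is a closed unbounded subset of the ordinal `κ`. -/
def IsClubIn (C : Set Ordinal) (κ : Ordinal) : Prop :=
  C ⊆ Set.Iio κ ∧ (∀ α < κ, ∃ β ∈ C, α ≤ β) ∧
    ∀ α < κ, 0 < α → (∀ β < α, ∃ γ ∈ C, β < γ ∧ γ < α) → α ∈ C

/-- `S` is a stationary subset of the ordinal `κ`. -/
def IsStationaryIn (S : Set Ordinal) (κ : Ordinal) : Prop :=
  S ⊆ Set.Iio κ ∧ ∀ C, IsClubIn C κ → (S ∩ C).Nonempty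

/-- `A` is a ladder system over `S ⊆ κ`: each `A δ` (for `δ ∈ S`) is a cofinal subset of `δ`. -/
def IsLadderOn (κ : Ordinal) (S : Set Ordinal) (A : Ordinal → Set Ordinal) : Prop :=
  IsStationaryIn S κ ∧ ∀ δ ∈ S, A δ ⊆ Set.Iio δ ∧ ∀ β < δ, ∃ α ∈ A δ, β ≤ α

/-- The order type of a set of ordinals. -/
noncomputable def otp (A : Set Ordinal) : Ordinal := Ordinal.type ((· < ·) : A → A → Prop)

/-- The set of accumulation points of a set of ordinals. -/
def acc (A : Set Ordinal) : Set Ordinal := {α ∈ A | sSup (A ∩ Set.Iio α) = α ∧ 0 < α}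

/-- The set of non-accumulation points of a set of ordinals. -/
def nacc (A : Set Ordinal) : Set Ordinal := A \ acc A

/-- Lift a cardinal to the universe where cardinalities of sets of ordinals live. -/
noncomputable abbrev cl (θ : Cardinal.{0}) : Cardinal.{1} := Cardinal.lift.{1} θ

/-- Lift an ordinal to the universe where order types of sets of ordinals live. -/
noncomputable abbrev ol (ξ : Ordinal.{0}) : Ordinal.{1} := Ordinal.lift.{1} ξ

/-- `p` is (the zero-extension of) a function with domain `D`. -/
def SupportedOn (D : Set Ordinal.{0}) (p : Ordinal.{0} → Ordinal.{0}) : Prop :=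
  ∀ α, α ∉ D → p α = 0

/-- The set of closure points below `κ.ord` of a function `g` bounded below `κ.ord`
is a club in `κ.ord`, when `κ` is regular uncountable. -/
theorem closure_club (κ : Cardinal.{0}) (hreg : κ.IsRegular) (hunc : ℵ₀ < κ)
    (g : Ordinal.{0} → Ordinal.{0}) (hg : ∀ β < κ.ord, g β < κ.ord) :
    IsClubIn {δ | δ < κ.ord ∧ ∀ β < δ, g β < δ} κ.ord := by
  classical
  have hlim : Order.IsSuccLimit κ.ord := Cardinal.isSuccLimit_ord hreg.aleph0_le
  have hsucc : ∀ {a : Ordinal.{0}}, a < κ.ord → a + 1 < κ.ord := by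
    intro a ha
    rw [Ordinal.add_one_eq_succ]
    exact hlim.succ_lt ha
  have step : ∀ a, a < κ.ord → ∃ b, a < b ∧ b < κ.ord ∧ ∀ β < a, g β < b := by
    intro a ha
    refine ⟨(Ordinal.bsup a (fun β _ => g β + 1)) ⊔ (a + 1), ?_, ?_, ?_⟩
    · calc a < a + 1 := by rw [Ordinal.add_one_eq_succ]; exact Order.lt_succ a
        _ ≤ _ := le_max_right _ _
    · refine max_lt ?_ (hsucc ha)
      refine Cardinal.bsup_lt_ord_of_isRegular hreg (Cardinal.lt_ord.mp ha) ?_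
      intro i hi
      exact hsucc (hg i (hi.trans ha))
    · intro β hβ
      calc g β < g β + 1 := by rw [Ordinal.add_one_eq_succ]; exact Order.lt_succ _
        _ ≤ Ordinal.bsup a (fun β _ => g β + 1) := Ordinal.le_bsup _ β hβ
        _ ≤ _ := le_max_left _ _
  refine ⟨fun δ hδ => hδ.1, ?_, ?_⟩
  · -- unbounded
    intro α hα
    set G : Ordinal.{0} → Ordinal.{0} :=
      fun a => if ha : a < κ.ord then (step a ha).choose else 0 with hG
    have hG1 : ∀ a (ha : a < κ.ord), a < G a ∧ G a < κ.ord ∧ ∀ β < a, g β < G a := by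
      intro a ha
      rw [hG]; simp only [dif_pos ha]
      exact (step a ha).choose_spec
    set F : ℕ → Ordinal.{0} := fun n => G^[n] (α + 1) with hF
    have hF0 : F 0 = α + 1 := rfl
    have hFs : ∀ n, F (n + 1) = G (F n) := by
      intro n
      rw [hF]
      simp [Function.iterate_succ_apply']
    have hFlt : ∀ n, F n < κ.ord := by
      intro n
      induction n with
      | zero => rw [hF0]; exact hsucc hα
      | succ n ih => rw [hFs]; exact (hG1 _ ih).2.1
    set δ : Ordinal.{0} := iSup F with hδ
    have hδκ : δ < κ.ord := by
      refine Cardinal.iSup_lt_ord_of_isRegular hreg ?_ hFlt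
      rw [Cardinal.mk_nat]
      exact hunc
    refine ⟨δ, ⟨hδκ, ?_⟩, ?_⟩
    · intro β hβ
      obtain ⟨n, hn⟩ := Ordinal.lt_iSup_iff.mp hβ
      calc g β < G (F n) := (hG1 _ (hFlt n)).2.2 β hn
        _ = F (n + 1) := (hFs n).symm
        _ ≤ δ := Ordinal.le_iSup F (n + 1)
    · calc α ≤ α + 1 := le_of_lt (by rw [Ordinal.add_one_eq_succ]; exact Order.lt_succ _)
        _ = F 0 := hF0.symm
        _ ≤ δ := Ordinal.le_iSup F 0
  · -- closed
    intro α hα hα0 hcl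
    refine ⟨hα, ?_⟩
    intro β hβ
    obtain ⟨γ, hγD, hβγ, hγα⟩ := hcl β hβ
    exact (hγD.2 β hβγ).trans hγα

/-- Given a weakly coherent `C`-sequence on `S ⊆ E^κ_μ` (where
`κ = cf(2^lam)`), an increasing cofinal `h : κ → 2^lam` and an increasing filtration
`⟨T_{<δ} : δ < κ⟩` (of size `< 2^lam` each) of the set `T` of all functions
`C_δ ∩ β → 2^lam` (`β ∈ nacc (C δ)`, `δ ∈ S`), every `f : κ → 2^lam` satisfies
`f↾C_δ ∈ P_δ` for club-many `δ ∈ S`, where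
`P_δ = {p : C_δ → h δ | ∀ β ∈ nacc (C δ), p↾(C δ ∩ β) ∈ T_{<δ}}`. -/
theorem stmt16 (lam κ μ : Cardinal.{0}) (hlam : ℵ₀ ≤ lam)
    (hκ : κ = ((2 : Cardinal) ^ lam).ord.cof)
    (hμreg : μ.IsRegular) (hμκ : μ < κ)
    (S : Set Ordinal.{0}) (hS : IsStationaryIn S κ.ord)
    (hSE : S ⊆ {δ : Ordinal.{0} | δ.cof = μ})
    (C : Ordinal.{0} → Set Ordinal.{0})
    (hC : ∀ δ ∈ S, C δ ⊆ Set.Iio δ ∧ (∀ β < δ, ∃ α ∈ C δ, β ≤ α) ∧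
      (∀ α < δ, 0 < α → (∀ β < α, ∃ γ ∈ C δ, β < γ ∧ γ < α) → α ∈ C δ) ∧
      otp (C δ) = ol μ.ord)
    (hcoh : ∀ γ ∈ S, ∀ δ ∈ S, γ < δ → ∀ β, β ∈ nacc (C γ) → β ∈ nacc (C δ) →
      C γ ∩ Set.Iio β = C δ ∩ Set.Iio β)
    (h : Ordinal.{0} → Ordinal.{0})
    (hmono : ∀ γ δ : Ordinal.{0}, γ < δ → δ < κ.ord → h γ < h δ)
    (hval : ∀ γ < κ.ord, h γ < ((2 : Cardinal) ^ lam).ord)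
    (hcofinal : ∀ ξ < ((2 : Cardinal) ^ lam).ord, ∃ γ < κ.ord, ξ ≤ h γ)
    (Tlt : Ordinal.{0} → Set (Ordinal.{0} → Ordinal.{0}))
    (hTsub : ∀ δ < κ.ord, ∀ p ∈ Tlt δ, ∃ δ' ∈ S, ∃ β ∈ nacc (C δ'),
      SupportedOn (C δ' ∩ Set.Iio β) p ∧
      ∀ α ∈ C δ' ∩ Set.Iio β, p α < ((2 : Cardinal) ^ lam).ord)
    (hTmono : ∀ γ δ : Ordinal.{0}, γ ≤ δ → δ < κ.ord → Tlt γ ⊆ Tlt δ)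
    (hTcover : ∀ p : Ordinal.{0} → Ordinal.{0},
      (∃ δ' ∈ S, ∃ β ∈ nacc (C δ'), SupportedOn (C δ' ∩ Set.Iio β) p ∧
        ∀ α ∈ C δ' ∩ Set.Iio β, p α < ((2 : Cardinal) ^ lam).ord) →
      ∃ γ < κ.ord, p ∈ Tlt γ)
    (hTsize : ∀ δ < κ.ord, #(Tlt δ) < cl ((2 : Cardinal) ^ lam))
    (f : Ordinal.{0} → Ordinal.{0})
    (hf : ∀ α < κ.ord, f α < ((2 : Cardinal) ^ lam).ord) :
    ∃ D, IsClubIn D κ.ord ∧ ∀ δ ∈ S ∩ D,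
      (∀ α ∈ C δ, f α < h δ) ∧
      ∀ β ∈ nacc (C δ), (C δ ∩ Set.Iio β).indicator f ∈ Tlt δ := by
  classical
  have h2lam : ℵ₀ ≤ (2 : Cardinal) ^ lam := hlam.trans (Cardinal.cantor lam).le
  have hlim2 : Order.IsSuccLimit ((2 : Cardinal) ^ lam).ord := Cardinal.isSuccLimit_ord h2lam
  have hκreg : κ.IsRegular := by rw [hκ]; exact Cardinal.isRegular_cof hlim2
  have hunc : ℵ₀ < κ := lt_of_le_of_lt hμreg.aleph0_le hμκ
  have hκlim : Order.IsSuccLimit κ.ord := Cardinal.isSuccLimit_ord hκreg.aleph0_le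
  have hSsub : S ⊆ Set.Iio κ.ord := hS.1
  -- existence for part (a)
  have ex1 : ∀ β, β < κ.ord → ∃ γ, γ < κ.ord ∧ f β < h γ := by
    intro β hβ
    obtain ⟨γ, hγ, hle⟩ := hcofinal (f β) (hf β hβ)
    have hγ1 : γ + 1 < κ.ord := by
      rw [Ordinal.add_one_eq_succ]; exact hκlim.succ_lt hγ
    refine ⟨γ + 1, hγ1, lt_of_le_of_lt hle (hmono γ (γ + 1) ?_ hγ1)⟩
    rw [Ordinal.add_one_eq_succ]; exact Order.lt_succ _
  -- existence for part (b)
  have ex2 : ∀ β, (∃ δ' ∈ S, β ∈ nacc (C δ')) →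
      ∃ γ, γ < κ.ord ∧ ∀ δ ∈ S, β ∈ nacc (C δ) →
        (C δ ∩ Set.Iio β).indicator f ∈ Tlt γ := by
    intro β ⟨δ', hδ'S, hβ'⟩
    have hbound : ∀ α ∈ C δ' ∩ Set.Iio β,
        (C δ' ∩ Set.Iio β).indicator f α < ((2 : Cardinal) ^ lam).ord := by
      intro α hα
      rw [Set.indicator_of_mem hα]
      have hαδ' : α < δ' := (hC δ' hδ'S).1 hα.1
      exact hf α (hαδ'.trans (hSsub hδ'S))
    obtain ⟨γ, hγκ, hγ⟩ := hTcover ((C δ' ∩ Set.Iio β).indicator f)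
      ⟨δ', hδ'S, β, hβ', fun α hα => Set.indicator_of_notMem hα f, hbound⟩
    refine ⟨γ, hγκ, ?_⟩
    intro δ hδS hβδ
    have heq : C δ ∩ Set.Iio β = C δ' ∩ Set.Iio β := by
      rcases lt_trichotomy δ δ' with hlt | heq | hgt
      · exact hcoh δ hδS δ' hδ'S hlt β hβδ hβ'
      · rw [heq]
      · exact (hcoh δ' hδ'S δ hδS hgt β hβ' hβδ).symm
    rw [heq]
    exact hγ
  -- the closure function
  set g : Ordinal.{0} → Ordinal.{0} := fun β =>
    if h1 : β < κ.ord then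
      (ex1 β h1).choose ⊔
        (if h2 : ∃ δ' ∈ S, β ∈ nacc (C δ') then (ex2 β h2).choose else 0)
    else 0 with hgdef
  have hg : ∀ β < κ.ord, g β < κ.ord := by
    intro β hβ
    rw [hgdef]; simp only [dif_pos hβ]
    refine max_lt (ex1 β hβ).choose_spec.1 ?_
    by_cases h2 : ∃ δ' ∈ S, β ∈ nacc (C δ')
    · simp only [dif_pos h2]; exact (ex2 β h2).choose_spec.1
    · simp only [dif_neg h2]; exact hκlim.pos
  refine ⟨{δ | δ < κ.ord ∧ ∀ β < δ, g β < δ}, closure_club κ hκreg hunc g hg, ?_⟩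
  rintro δ ⟨hδS, hδκ, hδcl⟩
  constructor
  · -- part (a)
    intro α hα
    have hαδ : α < δ := (hC δ hδS).1 hα
    have hακ : α < κ.ord := hαδ.trans hδκ
    have hle : (ex1 α hακ).choose ≤ g α := by
      rw [hgdef]; simp only [dif_pos hακ]; exact le_max_left _ _
    have hlt : (ex1 α hακ).choose < δ := lt_of_le_of_lt hle (hδcl α hαδ)
    exact lt_trans (ex1 α hακ).choose_spec.2 (hmono _ δ hlt hδκ)
  · -- part (b)
    intro β hβ
    have hβC : β ∈ C δ := hβ.1
    have hβδ : β < δ := (hC δ hδS).1 hβC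
    have h2 : ∃ δ' ∈ S, β ∈ nacc (C δ') := ⟨δ, hδS, hβ⟩
    have hle : (ex2 β h2).choose ≤ g β := by
      rw [hgdef]; simp only [dif_pos (hβδ.trans hδκ), dif_pos h2]
      exact le_max_right _ _
    have hlt : (ex2 β h2).choose < δ := lt_of_le_of_lt hle (hδcl β hβδ)
    exact hTmono _ δ hlt.le hδκ ((ex2 β h2).choose_spec.2 δ hδS hβ)

end LadderPaper
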